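/- Let P and P' be Borel probability measures on a compact set X ⊂ ℝ, let v : X → ℝ be continuous and injective. If for every natural number k, ∫ (v(x) + ∫ v dP)^k dP(x) = ∫ (v(x) + ∫ v dP')^k dP'(x), then P = P'. -/

import Mathlib

open MeasureTheory

/-- If two probability measures supported on a compact set `X ⊂ ℝ` give equal
moments of `v(x) + E[v]` for a continuous injective `v`, then they are equal. -/
theorem measure_eq_of_shifted_moments_eq (X : Set ℝ) (hX : IsCompact X)
    (v : ℝ → ℝ) (hv : ContinuousOn v X) (hvinj : Set.InjOn v X)
    (P P' : Measure ℝ) [IsProbabilityMeasure P] [IsProbabilityMeasure P']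
    (hP : P Xᶜ = 0) (hP' : P' Xᶜ = 0)
    (h : ∀ k : ℕ,
      ∫ x, (v x + ∫ y, v y ∂P) ^ k ∂P = ∫ x, (v x + ∫ y, v y ∂P') ^ k ∂P') :
    P = P' := by
  have hXm : MeasurableSet X := hX.isClosed.measurableSet
  have haeP : ∀ᵐ x ∂P, x ∈ X := by
    rw [ae_iff]; exact hP
  have haeP' : ∀ᵐ x ∂P', x ∈ X := by
    rw [ae_iff]; exact hP'
  -- integrability of functions continuous on `X`
  have hint : ∀ (μ : Measure ℝ), IsProbabilityMeasure μ → (∀ᵐ x ∂μ, x ∈ X) →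
      ∀ f : ℝ → ℝ, ContinuousOn f X → Integrable f μ := by
    intro μ hμ hae f hf
    haveI := hμ
    have hrestrict : μ.restrict X = μ := Measure.restrict_eq_self_of_ae_mem hae
    have hmeas : AEStronglyMeasurable f μ := by
      rw [← hrestrict]; exact hf.aestronglyMeasurable hXm
    obtain ⟨C, hC⟩ := hX.exists_bound_of_continuousOn hf
    exact (integrable_const C).mono' hmeas (hae.mono fun x hx => hC x hx)
  set c := ∫ y, v y ∂P with hc
  set c' := ∫ y, v y ∂P' with hc'
  have hvP : Integrable v P := hint P ‹_› haeP v hv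
  have hvP' : Integrable v P' := hint P' ‹_› haeP' v hv
  -- step 1 : the means agree
  have hcc : c = c' := by
    have h1 := h 1
    simp only [pow_one] at h1
    rw [integral_add hvP (integrable_const _), integral_add hvP' (integrable_const _)] at h1
    simp only [integral_const, probReal_univ, one_smul] at h1
    rw [← hc, ← hc'] at h1
    linarith
  -- shifted moments agree (with the same shift)
  have hmom : ∀ k : ℕ, ∫ x, (v x + c) ^ k ∂P = ∫ x, (v x + c) ^ k ∂P' := by
    intro k
    conv_rhs => rw [hcc]
    exact h k
  -- raw moments agree
  have hraw : ∀ k : ℕ, ∫ x, (v x) ^ k ∂P = ∫ x, (v x) ^ k ∂P' := by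
    intro k
    have expand : ∀ x : ℝ, (v x) ^ k =
        ∑ i ∈ Finset.range (k + 1), (v x + c) ^ i * (-c) ^ (k - i) * (k.choose i : ℝ) := by
      intro x
      rw [← add_pow]
      congr 1
      ring
    have hterm : ∀ (μ : Measure ℝ), IsProbabilityMeasure μ → (∀ᵐ x ∂μ, x ∈ X) → ∀ i : ℕ,
        Integrable (fun x => (v x + c) ^ i * (-c) ^ (k - i) * (k.choose i : ℝ)) μ := by
      intro μ hμ hae i
      exact hint μ hμ hae _
        ((((hv.add continuousOn_const).pow i).mul continuousOn_const).mul continuousOn_const)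
    simp_rw [expand]
    rw [integral_finset_sum _ (fun i _ => hterm P ‹_› haeP i),
      integral_finset_sum _ (fun i _ => hterm P' ‹_› haeP' i)]
    refine Finset.sum_congr rfl fun i _ => ?_
    rw [integral_mul_const, integral_mul_const, integral_mul_const, integral_mul_const,
      hmom i]
  -- polynomial moments agree
  have hpoly : ∀ p : Polynomial ℝ,
      ∫ x, p.eval (v x) ∂P = ∫ x, p.eval (v x) ∂P' := by
    intro p
    have expand : ∀ t : ℝ, p.eval t =
        ∑ i ∈ Finset.range (p.natDegree + 1), p.coeff i * t ^ i := fun t =>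
      Polynomial.eval_eq_sum_range t
    have hterm : ∀ (μ : Measure ℝ), IsProbabilityMeasure μ → (∀ᵐ x ∂μ, x ∈ X) → ∀ i : ℕ,
        Integrable (fun x => p.coeff i * (v x) ^ i) μ := by
      intro μ hμ hae i
      exact hint μ hμ hae _ (continuousOn_const.mul (hv.pow i))
    simp_rw [expand]
    rw [integral_finset_sum _ (fun i _ => hterm P ‹_› haeP i),
      integral_finset_sum _ (fun i _ => hterm P' ‹_› haeP' i)]
    refine Finset.sum_congr rfl fun i _ => ?_
    rw [integral_const_mul, integral_const_mul, hraw i]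
  -- Stone-Weierstrass : polynomial functions of v are dense in C(X, ℝ)
  haveI : CompactSpace X := isCompact_iff_compactSpace.mp hX
  let vc : C(X, ℝ) := ⟨fun x => v x.1, continuousOn_iff_continuous_restrict.mp hv⟩
  have hsep : (Algebra.adjoin ℝ ({vc} : Set C(X, ℝ))).SeparatesPoints := by
    intro x y hxy
    refine ⟨_, ⟨vc, Algebra.subset_adjoin (Set.mem_singleton _), rfl⟩, ?_⟩
    intro hvv
    exact hxy (Subtype.ext (hvinj x.2 y.2 hvv))
  have hdense :=
    ContinuousMap.subalgebra_topologicalClosure_eq_top_of_separatesPoints _ hsep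
  have happrox : ∀ (g : C(X, ℝ)) (ε : ℝ), 0 < ε →
      ∃ p : Polynomial ℝ, ∀ x : X, |g x - p.eval (v x.1)| ≤ ε := by
    intro g ε hε
    have hg : g ∈ closure ((Algebra.adjoin ℝ ({vc} : Set C(X, ℝ))) : Set C(X, ℝ)) := by
      have : g ∈ (Algebra.adjoin ℝ ({vc} : Set C(X, ℝ))).topologicalClosure := by
        rw [hdense]; trivial
      exact this
    obtain ⟨b, hbA, hb⟩ := Metric.mem_closure_iff.mp hg ε hε
    rw [Algebra.adjoin_singleton_eq_range_aeval] at hbA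
    obtain ⟨p, hp⟩ := hbA
    refine ⟨p, fun x => ?_⟩
    have := ContinuousMap.dist_apply_le_dist (f := g) (g := b) x
    have hbx : b x = p.eval (v x.1) := by
      rw [← hp]
      exact Polynomial.aeval_continuousMap_apply p vc x
    rw [Real.dist_eq, hbx] at this
    exact this.trans hb.le
  -- integrals of continuous functions agree
  have key : ∀ g : ℝ → ℝ, Continuous g → ∫ x, g x ∂P = ∫ x, g x ∂P' := by
    intro g hg
    have hgP : Integrable g P := hint P ‹_› haeP g hg.continuousOn
    have hgP' : Integrable g P' := hint P' ‹_› haeP' g hg.continuousOn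
    have main : ∀ ε : ℝ, 0 < ε → |(∫ x, g x ∂P) - ∫ x, g x ∂P'| ≤ 2 * ε := by
      intro ε hε
      obtain ⟨p, hp⟩ := happrox (ContinuousMap.restrict X ⟨g, hg⟩) ε hε
      have hp' : ∀ x ∈ X, |g x - p.eval (v x)| ≤ ε := fun x hx => hp ⟨x, hx⟩
      have hcont : ContinuousOn (fun x => p.eval (v x)) X :=
        p.continuous_aeval.comp_continuousOn hv
      have hpP : Integrable (fun x => p.eval (v x)) P := hint P ‹_› haeP _ hcont
      have hpP' : Integrable (fun x => p.eval (v x)) P' := hint P' ‹_› haeP' _ hcont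
      have h1 : ‖∫ x, (g x - p.eval (v x)) ∂P‖ ≤ ε * (P Set.univ).toReal :=
        norm_integral_le_of_norm_le_const (haeP.mono fun x hx => by
          simpa [Real.norm_eq_abs] using hp' x hx)
      have h2 : ‖∫ x, (g x - p.eval (v x)) ∂P'‖ ≤ ε * (P' Set.univ).toReal :=
        norm_integral_le_of_norm_le_const (haeP'.mono fun x hx => by
          simpa [Real.norm_eq_abs] using hp' x hx)
      rw [integral_sub hgP hpP, measure_univ, ENNReal.toReal_one, mul_one,
        Real.norm_eq_abs] at h1
      rw [integral_sub hgP' hpP', measure_univ, ENNReal.toReal_one, mul_one,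
        Real.norm_eq_abs] at h2
      have hpe := hpoly p
      rw [abs_le] at h1 h2 ⊢
      constructor <;> [linarith [h1.1, h2.2]; linarith [h1.2, h2.1]]
    by_contra hne
    have hδ : 0 < |(∫ x, g x ∂P) - ∫ x, g x ∂P'| := by
      rw [abs_pos, sub_ne_zero]; exact hne
    have := main (|(∫ x, g x ∂P) - ∫ x, g x ∂P'| / 4) (by positivity)
    linarith
  -- conclude via bounded continuous functions
  apply ext_of_forall_lintegral_eq_of_IsFiniteMeasure
  intro f
  have hfc : Continuous fun x => (f x : ℝ) := NNReal.continuous_coe.comp f.continuous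
  rw [lintegral_coe_eq_integral _ (hint P ‹_› haeP _ hfc.continuousOn),
    lintegral_coe_eq_integral _ (hint P' ‹_› haeP' _ hfc.continuousOn),
    key _ hfc]
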